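/- Dipole asymptotics in the weighted L¹ norm: let u₀ ∈ L¹(0,∞) have finite first absolute moment ∫₀^∞ y |u₀(y)| dy < ∞, set 𝒩₁ = ∫₀^∞ y u₀(y) dy, and let u(x,t) = ∫₀^∞ (G_t(x−y) − G_t(x+y)) u₀(y) dy for x > 0, t > 0. Then ∫₀^∞ |u(x,t) − 2𝒩₁·D(x,t)| · x dx → 0 as t → ∞. -/

import Mathlib

open MeasureTheory Real Filter

/-- The 1D Gaussian heat kernel `G_t(x) = (4πt)^{-1/2} exp(-x²/(4t))`. -/
noncomputable def heatKernel1 (t x : ℝ) : ℝ :=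
  (4 * π * t) ^ (-(1 : ℝ) / 2) * exp (-x ^ 2 / (4 * t))

/-- The dipole solution `D(x,t) = -∂_x G_t(x) = (x/(2t))·(4πt)^{-1/2} e^{-x²/(4t)}`. -/
noncomputable def dipole (x t : ℝ) : ℝ :=
  (x / (2 * t)) * (4 * π * t) ^ (-(1 : ℝ) / 2) * exp (-x ^ 2 / (4 * t))

/-- The solution of the Dirichlet problem for the heat equation on the half-line,
obtained by antisymmetric reflection:
`u(x,t) = ∫₀^∞ (G_t(x−y) − G_t(x+y)) u₀(y) dy`. -/
noncomputable def halfLineSol (u₀ : ℝ → ℝ) (x t : ℝ) : ℝ :=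
  ∫ y in Set.Ioi (0 : ℝ), (heatKernel1 t (x - y) - heatKernel1 t (x + y)) * u₀ y

namespace HLD

variable {t y x : ℝ}

lemma hk_cont : Continuous (heatKernel1 t) := by
  unfold heatKernel1; fun_prop

lemma hk_pos (ht : 0 < t) (x : ℝ) : 0 < heatKernel1 t x := by
  have h4 : 0 < 4 * π * t := by positivity
  exact mul_pos (rpow_pos_of_pos h4 _) (exp_pos _)

lemma hk_le (ht : 0 < t) (x : ℝ) : heatKernel1 t x ≤ (4 * π * t) ^ (-(1 : ℝ) / 2) := by
  have h4 : (0:ℝ) < 4 * π * t := by positivity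
  have : exp (-x ^ 2 / (4 * t)) ≤ 1 := by
    rw [exp_le_one_iff]
    apply div_nonpos_of_nonpos_of_nonneg (neg_nonpos.mpr (sq_nonneg x)) (by positivity)
  calc heatKernel1 t x ≤ (4 * π * t) ^ (-(1 : ℝ) / 2) * 1 :=
        mul_le_mul_of_nonneg_left this (rpow_pos_of_pos h4 _).le
    _ = _ := mul_one _

lemma c_mul_sqrt (ht : 0 < t) : (4 * π * t) ^ (-(1 : ℝ) / 2) * Real.sqrt (4 * π * t) = 1 := by
  have h4 : (0:ℝ) < 4 * π * t := by positivity
  rw [Real.sqrt_eq_rpow, ← Real.rpow_add h4]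
  norm_num

lemma hk_fun_eq : heatKernel1 t = fun x => (4 * π * t) ^ (-(1 : ℝ) / 2) *
    exp (-(1/(4*t)) * x ^ 2) := by
  funext x; unfold heatKernel1; ring_nf

lemma hk_integrable (ht : 0 < t) : Integrable (heatKernel1 t) := by
  rw [hk_fun_eq]
  exact (integrable_exp_neg_mul_sq (by positivity)).const_mul _

lemma hk_integral (ht : 0 < t) : ∫ x : ℝ, heatKernel1 t x = 1 := by
  simp only [hk_fun_eq]
  rw [integral_const_mul, integral_gaussian]
  have : π / (1/(4*t)) = 4 * π * t := by field_simp
  rw [this, c_mul_sqrt ht]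

lemma aux_exp1 {a : ℝ} : a * exp (-a) ≤ 1 := by
  rcases le_or_gt a 0 with h | h
  · have := exp_pos (-a)
    nlinarith
  · have h1 : a ≤ exp a := by linarith [Real.add_one_le_exp a]
    have h2 : exp a * exp (-a) = 1 := by rw [← Real.exp_add]; simp
    nlinarith [exp_pos (-a), exp_pos a]

lemma aux_exp2 {a : ℝ} (ha : 0 ≤ a) : a ^ 2 * exp (-a) ≤ 4 := by
  have h := aux_exp1 (a := a/2)
  have h2 : exp (-(a/2)) * exp (-(a/2)) = exp (-a) := by
    rw [← Real.exp_add]; ring_nf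
  have hb0 : 0 ≤ a/2 * exp (-(a/2)) := by positivity
  have key : a ^ 2 * exp (-a) = 4 * (a/2 * exp (-(a/2)))^2 := by rw [← h2]; ring
  rw [key]; nlinarith

lemma exp_split (ht : 0 < t) (x : ℝ) :
    exp (-x ^ 2 / (4*t)) = exp (-(x^2/(8*t))) * exp (-(x^2/(8*t))) := by
  rw [← Real.exp_add]; congr 1; field_simp; ring

lemma m2_pointwise (ht : 0 < t) (x : ℝ) :
    x ^ 2 * heatKernel1 t x ≤
      (4 * π * t) ^ (-(1 : ℝ) / 2) * (8*t * exp (-(x^2/(8*t)))) := by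
  have h4 : (0:ℝ) < (4 * π * t) ^ (-(1 : ℝ) / 2) := rpow_pos_of_pos (by positivity) _
  have key : x ^ 2 * exp (-x ^ 2 / (4*t)) ≤ 8*t * exp (-(x^2/(8*t))) := by
    rw [exp_split ht]
    have h1 : (x^2/(8*t)) * exp (-(x^2/(8*t))) ≤ 1 := aux_exp1
    have h2 : (0:ℝ) < exp (-(x^2/(8*t))) := exp_pos _
    have hx : x ^ 2 = 8*t*(x^2/(8*t)) := by field_simp
    have h3 := mul_le_mul_of_nonneg_right h1 h2.le
    calc x ^ 2 * (exp (-(x^2/(8*t))) * exp (-(x^2/(8*t))))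
        = 8*t*((x^2/(8*t)) * exp (-(x^2/(8*t))) * exp (-(x^2/(8*t)))) := by
          field_simp
      _ ≤ 8*t*(1 * exp (-(x^2/(8*t)))) := by
          apply mul_le_mul_of_nonneg_left _ (by positivity)
          simpa using h3
      _ = 8*t * exp (-(x^2/(8*t))) := by ring
  calc x ^ 2 * heatKernel1 t x
      = (4 * π * t) ^ (-(1 : ℝ) / 2) * (x ^ 2 * exp (-x ^ 2 / (4*t))) := by
        unfold heatKernel1; ring
    _ ≤ _ := by exact mul_le_mul_of_nonneg_left key h4.le

lemma m4_pointwise (ht : 0 < t) (x : ℝ) :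
    x ^ 4 * heatKernel1 t x ≤
      (4 * π * t) ^ (-(1 : ℝ) / 2) * (256*t^2 * exp (-(x^2/(8*t)))) := by
  have h4 : (0:ℝ) < (4 * π * t) ^ (-(1 : ℝ) / 2) := rpow_pos_of_pos (by positivity) _
  have key : x ^ 4 * exp (-x ^ 2 / (4*t)) ≤ 256*t^2 * exp (-(x^2/(8*t))) := by
    rw [exp_split ht]
    have h1 : (x^2/(8*t))^2 * exp (-(x^2/(8*t))) ≤ 4 := aux_exp2 (by positivity)
    have h2 : (0:ℝ) < exp (-(x^2/(8*t))) := exp_pos _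
    have hx : x ^ 4 = 64*t^2*(x^2/(8*t))^2 := by field_simp; ring
    have h3 := mul_le_mul_of_nonneg_right h1 h2.le
    calc x ^ 4 * (exp (-(x^2/(8*t))) * exp (-(x^2/(8*t))))
        = 64*t^2*((x^2/(8*t))^2 * exp (-(x^2/(8*t))) * exp (-(x^2/(8*t)))) := by
          field_simp; ring
      _ ≤ 64*t^2*(4 * exp (-(x^2/(8*t)))) := by
          apply mul_le_mul_of_nonneg_left _ (by positivity)
          simpa using h3
      _ = 256*t^2 * exp (-(x^2/(8*t))) := by ring
  calc x ^ 4 * heatKernel1 t x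
      = (4 * π * t) ^ (-(1 : ℝ) / 2) * (x ^ 4 * exp (-x ^ 2 / (4*t))) := by
        unfold heatKernel1; ring
    _ ≤ _ := by exact mul_le_mul_of_nonneg_left key h4.le

lemma gauss8_int (ht : 0 < t) : Integrable (fun x : ℝ => exp (-(x^2/(8*t)))) := by
  have : (fun x : ℝ => exp (-(x^2/(8*t)))) = fun x : ℝ => exp (-(1/(8*t)) * x^2) := by
    funext x; ring_nf
  rw [this]; exact integrable_exp_neg_mul_sq (by positivity)

lemma gauss8_val (ht : 0 < t) :
    ∫ x : ℝ, exp (-(x^2/(8*t))) = Real.sqrt 2 * Real.sqrt (4*π*t) := by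
  have : (fun x : ℝ => exp (-(x^2/(8*t)))) = fun x : ℝ => exp (-(1/(8*t)) * x^2) := by
    funext x; ring_nf
  rw [this, integral_gaussian]
  rw [← Real.sqrt_mul (by norm_num : (0:ℝ) ≤ 2)]
  congr 1
  field_simp; ring

lemma sqrt2_le : Real.sqrt 2 ≤ 1.5 := by
  nlinarith [Real.sq_sqrt (by norm_num : (0:ℝ) ≤ 2), Real.sqrt_nonneg 2]

lemma hk_m2_int (ht : 0 < t) : Integrable (fun x : ℝ => x ^ 2 * heatKernel1 t x) := by
  apply Integrable.mono' (((gauss8_int ht).const_mul (8*t)).const_mul _)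
  · exact ((continuous_pow 2).mul hk_cont).aestronglyMeasurable
  · filter_upwards with x
    rw [Real.norm_eq_abs, abs_of_nonneg (mul_nonneg (by positivity) (hk_pos ht x).le)]
    exact m2_pointwise ht x

lemma hk_m2 (ht : 0 < t) : ∫ x : ℝ, x ^ 2 * heatKernel1 t x ≤ 12 * t := by
  have h := integral_mono (hk_m2_int ht) (((gauss8_int ht).const_mul (8*t)).const_mul _)
    (m2_pointwise ht)
  rw [integral_const_mul, integral_const_mul, gauss8_val ht] at h
  have hc := c_mul_sqrt ht
  have h2 := sqrt2_le
  have key : (4 * π * t) ^ (-(1 : ℝ) / 2) * (8*t*(Real.sqrt 2 * Real.sqrt (4*π*t)))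
      = 8*t*Real.sqrt 2 * ((4 * π * t) ^ (-(1 : ℝ) / 2) * Real.sqrt (4*π*t)) := by ring
  rw [key, hc, mul_one] at h
  nlinarith [Real.sqrt_nonneg 2]

lemma hk_m4_int (ht : 0 < t) : Integrable (fun x : ℝ => x ^ 4 * heatKernel1 t x) := by
  apply Integrable.mono' (((gauss8_int ht).const_mul (256*t^2)).const_mul _)
  · exact ((continuous_pow 4).mul hk_cont).aestronglyMeasurable
  · filter_upwards with x
    rw [Real.norm_eq_abs, abs_of_nonneg (mul_nonneg (by positivity) (hk_pos ht x).le)]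
    exact m4_pointwise ht x

lemma hk_m4 (ht : 0 < t) : ∫ x : ℝ, x ^ 4 * heatKernel1 t x ≤ 512 * t ^ 2 := by
  have h := integral_mono (hk_m4_int ht) (((gauss8_int ht).const_mul (256*t^2)).const_mul _)
    (m4_pointwise ht)
  rw [integral_const_mul, integral_const_mul, gauss8_val ht] at h
  have hc := c_mul_sqrt ht
  have h2 := sqrt2_le
  have key : (4 * π * t) ^ (-(1 : ℝ) / 2) * (256*t^2*(Real.sqrt 2 * Real.sqrt (4*π*t)))
      = 256*t^2*Real.sqrt 2 * ((4 * π * t) ^ (-(1 : ℝ) / 2) * Real.sqrt (4*π*t)) := by ring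
  rw [key, hc, mul_one] at h
  nlinarith [Real.sqrt_nonneg 2, sq_nonneg t]

lemma hk_m1_int (ht : 0 < t) : Integrable (fun x : ℝ => |x| * heatKernel1 t x) := by
  apply Integrable.mono' ((hk_integrable ht).add (hk_m2_int ht))
  · exact (continuous_abs.mul hk_cont).aestronglyMeasurable
  · filter_upwards with x
    have hk := (hk_pos ht x).le
    rw [Real.norm_eq_abs, abs_of_nonneg (by positivity)]
    have h1 : |x| ≤ 1 + x^2 := by nlinarith [sq_abs x, abs_nonneg x]
    simp only [Pi.add_apply]
    nlinarith [mul_le_mul_of_nonneg_right h1 hk]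

lemma hk_m3_int (ht : 0 < t) : Integrable (fun x : ℝ => |x| ^ 3 * heatKernel1 t x) := by
  apply Integrable.mono' ((hk_m2_int ht).add (hk_m4_int ht))
  · exact ((continuous_abs.pow 3).mul hk_cont).aestronglyMeasurable
  · filter_upwards with x
    have hk := (hk_pos ht x).le
    rw [Real.norm_eq_abs, abs_of_nonneg (by positivity)]
    have h1 : |x| ^ 3 ≤ x^2 + x^4 := by
      nlinarith [sq_abs x, abs_nonneg x, sq_nonneg (|x|^2 - |x|), sq_nonneg (|x| - 1)]
    simp only [Pi.add_apply]
    nlinarith [mul_le_mul_of_nonneg_right h1 hk]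


/-! ### dipole and its derivative -/

noncomputable def Dp (t r : ℝ) : ℝ :=
  (1 / (2 * t) - r ^ 2 / (4 * t ^ 2)) * heatKernel1 t r

noncomputable def Ekern (t x y : ℝ) : ℝ :=
  heatKernel1 t (x - y) - heatKernel1 t (x + y) - 2 * y * dipole x t

noncomputable def Phi (t y : ℝ) : ℝ :=
  ∫ x in Set.Ioi (0 : ℝ), x * |Ekern t x y|

lemma dipole_cont (t : ℝ) : Continuous (fun x => dipole x t) := by
  unfold dipole; fun_prop

lemma dipole_nonneg (ht : 0 < t) (hx : 0 ≤ x) : 0 ≤ dipole x t :=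
  mul_nonneg (mul_nonneg (div_nonneg hx (by positivity))
    (rpow_pos_of_pos (by positivity) _).le) (exp_pos _).le

lemma dipole_abs (ht : 0 < t) (x : ℝ) :
    |dipole x t| = (|x| / (2 * t)) * heatKernel1 t x := by
  unfold dipole heatKernel1
  rw [abs_mul, abs_mul, abs_div, abs_of_pos (rpow_pos_of_pos (by positivity) _),
    abs_of_pos (exp_pos _), abs_of_pos (by positivity : (0:ℝ) < 2 * t)]
  ring

lemma Dp_cont (t : ℝ) : Continuous (Dp t) := by
  unfold Dp heatKernel1; fun_prop

lemma Dp_abs_le (ht : 0 < t) (r : ℝ) :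
    |Dp t r| ≤ (1 / (2 * t) + r ^ 2 / (4 * t ^ 2)) * heatKernel1 t r := by
  unfold Dp
  rw [abs_mul, abs_of_pos (hk_pos ht r)]
  apply mul_le_mul_of_nonneg_right _ (hk_pos ht r).le
  have h1 : (0:ℝ) ≤ 1 / (2 * t) := by positivity
  have h2 : (0:ℝ) ≤ r ^ 2 / (4 * t ^ 2) := by positivity
  rw [abs_le]
  constructor <;> linarith

lemma hk_hasDeriv (ht : 0 < t) (s : ℝ) :
    HasDerivAt (fun z => heatKernel1 t z) (-dipole s t) s := by
  have h1 : HasDerivAt (fun z : ℝ => -z ^ 2 / (4 * t)) (-(2 * s) / (4 * t)) s := by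
    simpa using ((hasDerivAt_pow 2 s).neg.div_const (4 * t))
  have h3 := (h1.exp).const_mul ((4 * π * t) ^ (-(1:ℝ) / 2))
  refine h3.congr_deriv ?_
  unfold dipole
  field_simp
  ring

lemma dipole_hasDeriv (ht : 0 < t) (r : ℝ) :
    HasDerivAt (fun z => dipole z t) (Dp t r) r := by
  have h1 : HasDerivAt (fun z : ℝ => -z ^ 2 / (4 * t)) (-(2 * r) / (4 * t)) r := by
    simpa using ((hasDerivAt_pow 2 r).neg.div_const (4 * t))
  have h4 : HasDerivAt (fun z : ℝ => z / (2 * t) * (4 * π * t) ^ (-(1:ℝ) / 2))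
      (1 / (2 * t) * (4 * π * t) ^ (-(1:ℝ) / 2)) r := by
    simpa using ((hasDerivAt_id r).div_const (2 * t)).mul_const ((4 * π * t) ^ (-(1:ℝ) / 2))
  have h5 := h4.mul h1.exp
  refine h5.congr_deriv ?_
  unfold Dp heatKernel1
  field_simp
  ring

lemma Ekern_cont (t : ℝ) : Continuous (fun p : ℝ × ℝ => Ekern t p.2 p.1) := by
  unfold Ekern heatKernel1 dipole; fun_prop

lemma Ekern_cont_x (t y : ℝ) : Continuous (fun x => Ekern t x y) := by
  unfold Ekern heatKernel1 dipole; fun_prop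

lemma hk_ftc (ht : 0 < t) (a b : ℝ) :
    ∫ s in a..b, dipole s t = heatKernel1 t a - heatKernel1 t b := by
  have key : ∀ s : ℝ, HasDerivAt (fun z => -heatKernel1 t z) (dipole s t) s := fun s => by
    have h := (hk_hasDeriv ht s).neg; rw [neg_neg] at h; exact h
  rw [intervalIntegral.integral_eq_sub_of_hasDerivAt (fun s _ => key s)
    ((dipole_cont t).intervalIntegrable a b)]
  ring

lemma dipole_ftc (ht : 0 < t) (a b : ℝ) :
    ∫ r in a..b, Dp t r = dipole b t - dipole a t := by
  rw [intervalIntegral.integral_eq_sub_of_hasDerivAt (fun r _ => dipole_hasDeriv ht r)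
    ((Dp_cont t).intervalIntegrable a b)]

lemma Ekern_eq (ht : 0 < t) (x y : ℝ) :
    Ekern t x y = ∫ s in (x - y)..(x + y), (dipole s t - dipole x t) := by
  rw [intervalIntegral.integral_sub ((dipole_cont t).intervalIntegrable _ _)
    intervalIntegrable_const, hk_ftc ht, intervalIntegral.integral_const]
  unfold Ekern
  simp only [smul_eq_mul]
  ring

lemma Ekern_abs_le (ht : 0 < t) (hy : 0 ≤ y) (x : ℝ) :
    |Ekern t x y| ≤ 2 * y * ∫ r in Set.Icc (x - y) (x + y), |Dp t r| := by
  set M : ℝ := ∫ r in Set.Icc (x - y) (x + y), |Dp t r| with hM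
  have hab : x - y ≤ x + y := by linarith
  have hDpInt : IntegrableOn (fun r => |Dp t r|) (Set.Icc (x - y) (x + y)) :=
    (Dp_cont t).abs.integrableOn_Icc
  have hbd : ∀ s ∈ Set.Icc (x - y) (x + y), |dipole s t - dipole x t| ≤ M := by
    intro s hs
    rw [Set.mem_Icc] at hs
    have : dipole s t - dipole x t = ∫ r in x..s, Dp t r := (dipole_ftc ht x s).symm
    rw [this]
    have hsub : Set.uIoc x s ⊆ Set.Icc (x - y) (x + y) := by
      intro r hr
      rw [Set.mem_uIoc] at hr
      rw [Set.mem_Icc]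
      rcases hr with ⟨h1, h2⟩ | ⟨h1, h2⟩ <;> constructor <;> linarith
    calc |∫ r in x..s, Dp t r| ≤ ∫ r in Set.uIoc x s, |Dp t r| := by
          simpa [Real.norm_eq_abs] using
            intervalIntegral.norm_integral_le_integral_norm_uIoc
              (f := Dp t) (a := x) (b := s) (μ := volume)
      _ ≤ M := setIntegral_mono_set hDpInt
          (Filter.Eventually.of_forall fun r => abs_nonneg _) (hsub.eventuallyLE)
  calc |Ekern t x y| ≤ ∫ s in (x-y)..(x+y), |dipole s t - dipole x t| := by
        rw [Ekern_eq ht x y]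
        simpa [Real.norm_eq_abs] using
          intervalIntegral.norm_integral_le_integral_norm
            (f := fun s => dipole s t - dipole x t) (μ := volume) hab
    _ ≤ ∫ _ in (x-y)..(x+y), M := by
        apply intervalIntegral.integral_mono_on hab _ intervalIntegrable_const
        · intro s hs; exact hbd s hs
        · exact (((dipole_cont t).sub continuous_const).abs).intervalIntegrable _ _
    _ = 2 * y * M := by
        rw [intervalIntegral.integral_const, smul_eq_mul]
        ring

lemma Phi_nonneg (t y : ℝ) : 0 ≤ Phi t y :=
  setIntegral_nonneg measurableSet_Ioi fun x hx =>
    mul_nonneg (le_of_lt hx) (abs_nonneg _)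

lemma hk_shift_w_int (ht : 0 < t) (a : ℝ) :
    Integrable (fun x : ℝ => |x| * heatKernel1 t (x - a)) := by
  have base : Integrable (fun u : ℝ => |u| * heatKernel1 t u + |a| * heatKernel1 t u) :=
    (hk_m1_int ht).add ((hk_integrable ht).const_mul _)
  have shifted := base.comp_sub_right a
  apply shifted.mono'
  · exact (continuous_abs.mul (hk_cont.comp (continuous_id.sub continuous_const))).aestronglyMeasurable
  · filter_upwards with x
    have hk := (hk_pos ht (x - a)).le
    have h1 : |x| ≤ |x - a| + |a| := by
      calc |x| = |(x - a) + a| := by ring_nf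
        _ ≤ |x - a| + |a| := abs_add_le _ _
    rw [Real.norm_eq_abs, abs_of_nonneg (mul_nonneg (abs_nonneg _) hk)]
    nlinarith [mul_le_mul_of_nonneg_right h1 hk]

lemma xE_int (ht : 0 < t) (y : ℝ) :
    IntegrableOn (fun x => x * |Ekern t x y|) (Set.Ioi (0 : ℝ)) := by
  have hi1 := hk_shift_w_int ht y
  have hi2 : Integrable (fun x : ℝ => |x| * heatKernel1 t (x + y)) := by
    have := hk_shift_w_int ht (-y)
    simpa [sub_neg_eq_add] using this
  have hi3 : Integrable (fun x : ℝ => (|y| / t) * (x ^ 2 * heatKernel1 t x)) :=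
    (hk_m2_int ht).const_mul _
  apply Integrable.mono' (μ := volume.restrict (Set.Ioi 0))
    (((hi1.add hi2).add hi3).integrableOn)
  · exact (continuous_id.mul (Ekern_cont_x t y).abs).aestronglyMeasurable.restrict
  · filter_upwards with x
    have hE : |Ekern t x y| ≤ heatKernel1 t (x - y) + heatKernel1 t (x + y)
        + 2 * |y| * |dipole x t| := by
      unfold Ekern
      calc |heatKernel1 t (x - y) - heatKernel1 t (x + y) - 2 * y * dipole x t|
          ≤ |heatKernel1 t (x - y) - heatKernel1 t (x + y)| + |2 * y * dipole x t| :=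
            abs_sub _ _
        _ ≤ (|heatKernel1 t (x - y)| + |heatKernel1 t (x + y)|) + |2 * y * dipole x t| := by
            linarith [abs_sub (heatKernel1 t (x - y)) (heatKernel1 t (x + y))]
        _ = heatKernel1 t (x - y) + heatKernel1 t (x + y) + 2 * |y| * |dipole x t| := by
            rw [abs_of_pos (hk_pos ht _), abs_of_pos (hk_pos ht _), abs_mul, abs_mul]
            norm_num
    have heq : |x| * (2 * |y| * |dipole x t|) = (|y| / t) * (x ^ 2 * heatKernel1 t x) := by
      rw [dipole_abs ht]
      field_simp
      have hxx : |x| * |x| = x ^ 2 := by rw [abs_mul_abs_self x]; ring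
      linear_combination (|y| * heatKernel1 t x) * hxx
    rw [Real.norm_eq_abs, abs_mul, abs_abs]
    have hx2 : |x| * |Ekern t x y| ≤ |x| * (heatKernel1 t (x - y) + heatKernel1 t (x + y)
        + 2 * |y| * |dipole x t|) := mul_le_mul_of_nonneg_left hE (abs_nonneg _)
    simp only [Pi.add_apply]
    calc |x| * |Ekern t x y| ≤ |x| * heatKernel1 t (x - y) + |x| * heatKernel1 t (x + y)
          + |x| * (2 * |y| * |dipole x t|) := by linarith [hx2]
      _ = |x| * heatKernel1 t (x - y) + |x| * heatKernel1 t (x + y)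
          + (|y| / t) * (x ^ 2 * heatKernel1 t x) := by rw [heq]
      _ ≤ _ := le_refl _

/-! ### weighted bounds -/

lemma uG_int (ht : 0 < t) : Integrable (fun u : ℝ => u * heatKernel1 t u) := by
  apply (hk_m1_int ht).mono'
  · exact (continuous_id.mul hk_cont).aestronglyMeasurable
  · filter_upwards with u
    rw [Real.norm_eq_abs, abs_mul, abs_of_pos (hk_pos ht u)]

lemma wg_int (ht : 0 < t) (c : ℝ) : Integrable (fun u : ℝ => (u + c) * heatKernel1 t u) := by
  have : (fun u : ℝ => (u + c) * heatKernel1 t u)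
      = fun u => u * heatKernel1 t u + c * heatKernel1 t u := by
    funext u; ring
  rw [this]
  exact (uG_int ht).add ((hk_integrable ht).const_mul _)

lemma xshift_int (ht : 0 < t) (a : ℝ) :
    Integrable (fun x : ℝ => x * heatKernel1 t (x - a)) := by
  apply (hk_shift_w_int ht a).mono'
  · exact (continuous_id.mul (hk_cont.comp (continuous_id.sub continuous_const))).aestronglyMeasurable
  · filter_upwards with x
    rw [Real.norm_eq_abs, abs_mul, abs_of_pos (hk_pos ht _)]

lemma xshift_int' (ht : 0 < t) (a : ℝ) :
    Integrable (fun x : ℝ => x * heatKernel1 t (x + a)) := by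
  have := xshift_int ht (-a)
  simpa [sub_neg_eq_add] using this

lemma transl_shift1 (ht : 0 < t) (y : ℝ) :
    ∫ x in Set.Ioi (0:ℝ), x * heatKernel1 t (x - y)
      = ∫ u in Set.Ioi (-y), (u + y) * heatKernel1 t u := by
  rw [← integral_indicator measurableSet_Ioi, ← integral_indicator measurableSet_Ioi]
  have key : (Set.Ioi (0:ℝ)).indicator (fun x => x * heatKernel1 t (x - y))
      = fun x => (Set.Ioi (-y)).indicator (fun u => (u + y) * heatKernel1 t u) (x - y) := by
    funext x
    by_cases hx : 0 < x
    · rw [Set.indicator_of_mem (Set.mem_Ioi.mpr hx),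
        Set.indicator_of_mem (Set.mem_Ioi.mpr (by linarith))]
      try ring_nf
    · rw [Set.indicator_of_notMem (by simpa using hx),
        Set.indicator_of_notMem (by simp only [Set.mem_Ioi]; intro h; exact hx (by linarith))]
  rw [key, integral_sub_right_eq_self]

lemma transl_shift2 (ht : 0 < t) (y : ℝ) :
    ∫ x in Set.Ioi (0:ℝ), x * heatKernel1 t (x + y)
      = ∫ u in Set.Ioi y, (u - y) * heatKernel1 t u := by
  rw [← integral_indicator measurableSet_Ioi, ← integral_indicator measurableSet_Ioi]
  have key : (Set.Ioi (0:ℝ)).indicator (fun x => x * heatKernel1 t (x + y))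
      = fun x => (Set.Ioi y).indicator (fun u => (u - y) * heatKernel1 t u) (x + y) := by
    funext x
    by_cases hx : 0 < x
    · rw [Set.indicator_of_mem (Set.mem_Ioi.mpr hx),
        Set.indicator_of_mem (Set.mem_Ioi.mpr (by linarith))]
      try ring_nf
    · rw [Set.indicator_of_notMem (by simpa using hx),
        Set.indicator_of_notMem (by simp only [Set.mem_Ioi]; intro h; exact hx (by linarith))]
  rw [key, integral_add_right_eq_self]

lemma transl_bound (ht : 0 < t) (hy : 0 < y) :
    ∫ x in Set.Ioi (0 : ℝ), x * (heatKernel1 t (x - y) - heatKernel1 t (x + y)) ≤ 2 * y := by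
  have hsplit_eq : ∫ x in Set.Ioi (0:ℝ), x * (heatKernel1 t (x - y) - heatKernel1 t (x + y))
      = (∫ x in Set.Ioi (0:ℝ), x * heatKernel1 t (x - y))
        - ∫ x in Set.Ioi (0:ℝ), x * heatKernel1 t (x + y) := by
    rw [← integral_sub ((xshift_int ht y).integrableOn) ((xshift_int' ht y).integrableOn)]
    apply setIntegral_congr_fun measurableSet_Ioi
    intro x _; ring
  rw [hsplit_eq, transl_shift1 ht y, transl_shift2 ht y]
  have hunion : Set.Ioc (-y) y ∪ Set.Ioi y = Set.Ioi (-y) :=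
    Set.Ioc_union_Ioi_eq_Ioi (by linarith)
  have hdisj : Disjoint (Set.Ioc (-y) y) (Set.Ioi y) := Set.Ioc_disjoint_Ioi le_rfl
  have hsplit : ∫ u in Set.Ioi (-y), (u + y) * heatKernel1 t u
      = (∫ u in Set.Ioc (-y) y, (u + y) * heatKernel1 t u)
        + ∫ u in Set.Ioi y, (u + y) * heatKernel1 t u := by
    rw [← hunion, setIntegral_union hdisj measurableSet_Ioi
      (wg_int ht y).integrableOn (wg_int ht y).integrableOn]
  rw [hsplit]
  have hdiff : (∫ u in Set.Ioi y, (u + y) * heatKernel1 t u)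
      - ∫ u in Set.Ioi y, (u - y) * heatKernel1 t u
      = ∫ u in Set.Ioi y, 2 * y * heatKernel1 t u := by
    have hg2 : IntegrableOn (fun u : ℝ => (u - y) * heatKernel1 t u) (Set.Ioi y) := by
      have := (wg_int ht (-y)).integrableOn (s := Set.Ioi y)
      simpa [sub_eq_add_neg] using this
    rw [← integral_sub (wg_int ht y).integrableOn hg2]
    apply setIntegral_congr_fun measurableSet_Ioi
    intro u _; ring
  have hb1 : ∫ u in Set.Ioc (-y) y, (u + y) * heatKernel1 t u
      ≤ ∫ u in Set.Ioc (-y) y, 2 * y * heatKernel1 t u := by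
    apply setIntegral_mono_on (wg_int ht y).integrableOn
      (((hk_integrable ht).const_mul _).integrableOn) measurableSet_Ioc
    intro u hu
    have := (hk_pos ht u).le
    have hu2 := hu.2
    nlinarith
  have hcombine : (∫ u in Set.Ioc (-y) y, 2 * y * heatKernel1 t u)
      + ∫ u in Set.Ioi y, 2 * y * heatKernel1 t u
      = ∫ u in Set.Ioi (-y), 2 * y * heatKernel1 t u := by
    rw [← hunion, setIntegral_union hdisj measurableSet_Ioi
      ((hk_integrable ht).const_mul _).integrableOn
      ((hk_integrable ht).const_mul _).integrableOn]
  have hfinal : ∫ u in Set.Ioi (-y), 2 * y * heatKernel1 t u ≤ 2 * y := by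
    rw [integral_const_mul]
    have h1 : ∫ u in Set.Ioi (-y), heatKernel1 t u ≤ ∫ u : ℝ, heatKernel1 t u :=
      setIntegral_le_integral (hk_integrable ht)
        (Filter.Eventually.of_forall fun u => (hk_pos ht u).le)
    rw [hk_integral ht] at h1
    nlinarith
  have e1 := hdiff
  linarith [hb1, hcombine, hfinal,
    le_of_eq hdiff.symm]

lemma xdip_eq (ht : 0 < t) (x : ℝ) :
    x * dipole x t = (1/(2*t)) * (x ^ 2 * heatKernel1 t x) := by
  unfold dipole heatKernel1
  field_simp

lemma xdip_int (ht : 0 < t) : Integrable (fun x : ℝ => x * dipole x t) := by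
  simp only [xdip_eq ht]
  exact (hk_m2_int ht).const_mul _

lemma xdip_bound (ht : 0 < t) :
    ∫ x in Set.Ioi (0 : ℝ), x * dipole x t ≤ 6 := by
  have h1 : ∫ x in Set.Ioi (0:ℝ), x * dipole x t ≤ ∫ x : ℝ, x * dipole x t := by
    apply setIntegral_le_integral (xdip_int ht)
    filter_upwards with x
    simp only [Pi.zero_apply, xdip_eq ht x]
    exact mul_nonneg (by positivity) (mul_nonneg (sq_nonneg x) (hk_pos ht x).le)
  have h2 : ∫ x : ℝ, x * dipole x t ≤ 6 := by
    simp only [xdip_eq ht]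
    rw [integral_const_mul]
    have := hk_m2 ht
    have h3 : (0:ℝ) < 1/(2*t) := by positivity
    calc (1/(2*t)) * ∫ x : ℝ, x ^ 2 * heatKernel1 t x ≤ (1/(2*t)) * (12 * t) := by
          exact mul_le_mul_of_nonneg_left this h3.le
      _ = 6 := by field_simp; ring
  linarith

lemma hk_sub_nonneg (ht : 0 < t) (hx : 0 < x) (hy : 0 < y) :
    0 ≤ heatKernel1 t (x - y) - heatKernel1 t (x + y) := by
  unfold heatKernel1
  have hc : (0:ℝ) < (4 * π * t) ^ (-(1:ℝ)/2) := rpow_pos_of_pos (by positivity) _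
  have hexp : exp (-(x+y) ^ 2 / (4 * t)) ≤ exp (-(x-y) ^ 2 / (4 * t)) := by
    apply exp_le_exp.mpr
    apply (div_le_div_iff_of_pos_right (by positivity : (0:ℝ) < 4 * t)).mpr
    nlinarith [mul_pos hx hy]
  nlinarith
 
lemma PhiA (ht : 0 < t) (hy : 0 < y) : Phi t y ≤ 14 * y := by
  have hg_int : IntegrableOn (fun x => x * (heatKernel1 t (x-y) - heatKernel1 t (x+y))
      + 2 * y * (x * dipole x t)) (Set.Ioi (0:ℝ)) := by
    apply Integrable.add
    · have : (fun x : ℝ => x * (heatKernel1 t (x-y) - heatKernel1 t (x+y)))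
          = fun x => x * heatKernel1 t (x-y) - x * heatKernel1 t (x+y) := by
        funext x; ring
      rw [this]
      exact ((xshift_int ht y).sub (xshift_int' ht y)).integrableOn
    · exact ((xdip_int ht).const_mul _).integrableOn
  have hstep : Phi t y ≤ ∫ x in Set.Ioi (0:ℝ),
      (x * (heatKernel1 t (x-y) - heatKernel1 t (x+y)) + 2 * y * (x * dipole x t)) := by
    refine integral_mono_of_nonneg ?_ hg_int ?_
    · filter_upwards [ae_restrict_mem measurableSet_Ioi] with x hx
      simpa using mul_nonneg (le_of_lt hx) (abs_nonneg (Ekern t x y))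
    · filter_upwards [ae_restrict_mem measurableSet_Ioi] with x hx
      have hd : 0 ≤ dipole x t := dipole_nonneg ht (le_of_lt hx)
      have hGm := hk_sub_nonneg ht hx hy
      have habs : |Ekern t x y| ≤ (heatKernel1 t (x-y) - heatKernel1 t (x+y))
          + 2 * y * dipole x t := by
        unfold Ekern
        rw [abs_le]
        constructor
        · nlinarith
        · nlinarith
      nlinarith [mul_le_mul_of_nonneg_left habs (le_of_lt hx)]
  have hsum : ∫ x in Set.Ioi (0:ℝ),
      (x * (heatKernel1 t (x-y) - heatKernel1 t (x+y)) + 2 * y * (x * dipole x t))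
      = (∫ x in Set.Ioi (0:ℝ), x * (heatKernel1 t (x-y) - heatKernel1 t (x+y)))
        + ∫ x in Set.Ioi (0:ℝ), 2 * y * (x * dipole x t) := by
    apply integral_add
    · have : (fun x : ℝ => x * (heatKernel1 t (x-y) - heatKernel1 t (x+y)))
          = fun x => x * heatKernel1 t (x-y) - x * heatKernel1 t (x+y) := by
        funext x; ring
      rw [this]
      exact ((xshift_int ht y).sub (xshift_int' ht y)).integrableOn
    · exact ((xdip_int ht).const_mul _).integrableOn
  have h2 : ∫ x in Set.Ioi (0:ℝ), 2 * y * (x * dipole x t) ≤ 12 * y := by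
    rw [integral_const_mul]
    have := xdip_bound ht
    nlinarith
  have h1 := transl_bound ht hy
  calc Phi t y ≤ _ := hstep
    _ = _ := hsum
    _ ≤ 2 * y + 12 * y := add_le_add h1 h2
    _ = 14 * y := by ring

/-! ### moment bound for Dp -/

lemma Dp_w_ptwise (ht : 0 < t) (hy : 0 ≤ y) (r : ℝ) :
    |Dp t r| * (|r| + y) ≤
      ((1/(2*t))*(Real.sqrt t/2 + y)) * heatKernel1 t r
      + ((1/(2*t))*(1/(2*Real.sqrt t)) + (1/(4*t^2))*(Real.sqrt t/2 + y))
          * (r^2 * heatKernel1 t r)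
      + ((1/(4*t^2))*(1/(2*Real.sqrt t))) * (r^4 * heatKernel1 t r) := by
  have hs : 0 < Real.sqrt t := Real.sqrt_pos.mpr ht
  have hAM : |r| + y ≤ Real.sqrt t/2 + y + r^2/(2*Real.sqrt t) := by
    have h5 : (|r| - Real.sqrt t/2) * (2*Real.sqrt t) ≤ r^2 := by
      nlinarith [sq_nonneg (Real.sqrt t - |r|), sq_abs r]
    have h6 := (le_div_iff₀ (by positivity : (0:ℝ) < 2*Real.sqrt t)).mpr h5
    linarith
  have h1 := Dp_abs_le ht r
  have hGpos := (hk_pos ht r).le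
  calc |Dp t r| * (|r| + y)
      ≤ ((1/(2*t) + r^2/(4*t^2)) * heatKernel1 t r) * (Real.sqrt t/2 + y + r^2/(2*Real.sqrt t)) :=
        mul_le_mul h1 hAM (add_nonneg (abs_nonneg r) hy)
          (mul_nonneg (by positivity) hGpos)
    _ = _ := by ring

lemma Dp_weight_int (ht : 0 < t) (hy : 0 ≤ y) :
    Integrable (fun r : ℝ => |Dp t r| * (|r| + y)) := by
  have hs : 0 < Real.sqrt t := Real.sqrt_pos.mpr ht
  have hdom : Integrable (fun r : ℝ =>
      ((1/(2*t))*(Real.sqrt t/2 + y)) * heatKernel1 t r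
      + ((1/(2*t))*(1/(2*Real.sqrt t)) + (1/(4*t^2))*(Real.sqrt t/2 + y))
          * (r^2 * heatKernel1 t r)
      + ((1/(4*t^2))*(1/(2*Real.sqrt t))) * (r^4 * heatKernel1 t r)) :=
    (((hk_integrable ht).const_mul _).add ((hk_m2_int ht).const_mul _)).add
      ((hk_m4_int ht).const_mul _)
  apply hdom.mono'
  · exact ((Dp_cont t).abs.mul (continuous_abs.add continuous_const)).aestronglyMeasurable
  · filter_upwards with r
    rw [Real.norm_eq_abs,
      abs_of_nonneg (mul_nonneg (abs_nonneg _) (add_nonneg (abs_nonneg _) hy))]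
    exact Dp_w_ptwise ht hy r

lemma Dp_mom (ht : 0 < t) (hy : 0 ≤ y) :
    ∫ r : ℝ, |Dp t r| * (|r| + y) ≤ 69 / Real.sqrt t + 4 * y / t := by
  have hs : 0 < Real.sqrt t := Real.sqrt_pos.mpr ht
  have hi1 : Integrable (fun r : ℝ =>
      ((1/(2*t))*(Real.sqrt t/2 + y)) * heatKernel1 t r) := (hk_integrable ht).const_mul _
  have hi2 : Integrable (fun r : ℝ =>
      ((1/(2*t))*(1/(2*Real.sqrt t)) + (1/(4*t^2))*(Real.sqrt t/2 + y))
          * (r^2 * heatKernel1 t r)) := (hk_m2_int ht).const_mul _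
  have hi3 : Integrable (fun r : ℝ =>
      ((1/(4*t^2))*(1/(2*Real.sqrt t))) * (r^4 * heatKernel1 t r)) := (hk_m4_int ht).const_mul _
  have hmono := integral_mono (Dp_weight_int ht hy) ((hi1.add hi2).add hi3)
    (Dp_w_ptwise ht hy)
  simp only [Pi.add_apply] at hmono
  have hi12 : Integrable (fun r : ℝ =>
      ((1/(2*t))*(Real.sqrt t/2 + y)) * heatKernel1 t r
      + ((1/(2*t))*(1/(2*Real.sqrt t)) + (1/(4*t^2))*(Real.sqrt t/2 + y))
          * (r^2 * heatKernel1 t r)) := hi1.add hi2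
  rw [integral_add hi12 hi3, integral_add hi1 hi2,
    integral_const_mul, integral_const_mul, integral_const_mul, hk_integral ht] at hmono
  have ha2 : (0:ℝ) ≤ (1/(2*t))*(1/(2*Real.sqrt t)) + (1/(4*t^2))*(Real.sqrt t/2 + y) := by
    positivity
  have ha3 : (0:ℝ) ≤ (1/(4*t^2))*(1/(2*Real.sqrt t)) := by positivity
  have hm2 := hk_m2 ht
  have hm4 := hk_m4 ht
  have hts : t = Real.sqrt t ^ 2 := (Real.sq_sqrt ht.le).symm
  have key : (1/(2*t))*(Real.sqrt t/2 + y) * 1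
      + ((1/(2*t))*(1/(2*Real.sqrt t)) + (1/(4*t^2))*(Real.sqrt t/2 + y)) * (12*t)
      + ((1/(4*t^2))*(1/(2*Real.sqrt t))) * (512*t^2)
      = 68.75/Real.sqrt t + 3.5*y/t := by
    set s := Real.sqrt t with hsdef
    rw [show t = s^2 by rw [hsdef, Real.sq_sqrt ht.le]]
    field_simp
    ring
  have hfin : 68.75/Real.sqrt t + 3.5*y/t ≤ 69/Real.sqrt t + 4*y/t := by
    gcongr <;> linarith
  nlinarith [mul_le_mul_of_nonneg_left hm2 ha2, mul_le_mul_of_nonneg_left hm4 ha3]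

/-! ### Fubini window argument -/

noncomputable def Q (t y r x : ℝ) : ℝ :=
  if x ∈ Set.Icc (r - y) (r + y) then x * |Dp t r| else 0

lemma Q_eq_indicator (t y r : ℝ) :
    Q t y r = (Set.Icc (r - y) (r + y)).indicator (fun x => x * |Dp t r|) := by
  funext x
  simp [Q, Set.indicator_apply]

lemma Q_eq_indicator' (t y x : ℝ) :
    (fun r => Q t y r x) = (Set.Icc (x - y) (x + y)).indicator (fun r => x * |Dp t r|) := by
  funext r
  simp only [Q, Set.indicator_apply, Set.mem_Icc]
  apply if_congr _ rfl rfl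
  constructor <;> intro h <;> exact ⟨by linarith [h.1, h.2], by linarith [h.1, h.2]⟩

lemma Q_uncurry_aesm (t y : ℝ) :
    AEStronglyMeasurable (Function.uncurry (Q t y))
      (volume.prod (volume.restrict (Set.Ioi (0:ℝ)))) := by
  have hset : MeasurableSet {p : ℝ × ℝ | p.1 - y ≤ p.2 ∧ p.2 ≤ p.1 + y} := by
    apply MeasurableSet.inter
    · exact measurableSet_le (measurable_fst.sub measurable_const) measurable_snd
    · exact measurableSet_le measurable_snd (measurable_fst.add measurable_const)
  have hg : Continuous (fun p : ℝ × ℝ => p.2 * |Dp t p.1|) :=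
    continuous_snd.mul (((Dp_cont t).comp continuous_fst).abs)
  have key : Function.uncurry (Q t y)
      = Set.indicator {p : ℝ × ℝ | p.1 - y ≤ p.2 ∧ p.2 ≤ p.1 + y}
          (fun p => p.2 * |Dp t p.1|) := by
    funext p
    simp [Function.uncurry, Q, Set.indicator_apply, Set.mem_Icc, Set.mem_setOf_eq]
  rw [key]
  exact (hg.stronglyMeasurable.indicator hset).aestronglyMeasurable

lemma Q_slice_int (t y r : ℝ) :
    Integrable (fun x => Q t y r x) (volume.restrict (Set.Ioi (0:ℝ))) := by
  rw [show (fun x => Q t y r x) = Q t y r from rfl, Q_eq_indicator]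
  have h1 : IntegrableOn (fun x : ℝ => x * |Dp t r|) (Set.Icc (r - y) (r + y)) :=
    (continuous_id.mul continuous_const).integrableOn_Icc
  exact (h1.integrable_indicator measurableSet_Icc).mono_measure Measure.restrict_le_self

lemma Q_indconst_int (t y r : ℝ) :
    Integrable ((Set.Icc (r - y) (r + y)).indicator
      (fun _ : ℝ => (|r| + y) * |Dp t r|)) (volume.restrict (Set.Ioi (0:ℝ))) := by
  have h1 : IntegrableOn (fun _ : ℝ => (|r| + y) * |Dp t r|) (Set.Icc (r - y) (r + y)) := by
    apply (integrableOn_const_iff).mpr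
    right
    exact measure_Icc_lt_top
  exact (h1.integrable_indicator measurableSet_Icc).mono_measure Measure.restrict_le_self

lemma Q_ptwise_le (t y r x : ℝ) (hy : 0 ≤ y) :
    Q t y r x ≤ (Set.Icc (r - y) (r + y)).indicator
      (fun _ : ℝ => (|r| + y) * |Dp t r|) x := by
  rw [Q_eq_indicator]
  by_cases hx : x ∈ Set.Icc (r - y) (r + y)
  · rw [Set.indicator_of_mem hx, Set.indicator_of_mem hx]
    apply mul_le_mul_of_nonneg_right _ (abs_nonneg _)
    rcases Set.mem_Icc.mp hx with ⟨_, h2⟩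
    calc x ≤ r + y := h2
      _ ≤ |r| + y := by linarith [le_abs_self r]
  · rw [Set.indicator_of_notMem hx, Set.indicator_of_notMem hx]

lemma window_bound (t : ℝ) {y : ℝ} (hy : 0 < y) (r : ℝ) :
    ∫ x in Set.Ioi (0:ℝ), Q t y r x ≤ 2 * y * ((|r| + y) * |Dp t r|) := by
  have hmono := integral_mono (μ := volume.restrict (Set.Ioi (0:ℝ)))
    (Q_slice_int t y r) (Q_indconst_int t y r) (fun x => Q_ptwise_le t y r x hy.le)
  have hval : ∫ x in Set.Ioi (0:ℝ), (Set.Icc (r - y) (r + y)).indicator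
      (fun _ : ℝ => (|r| + y) * |Dp t r|) x ≤ 2 * y * ((|r| + y) * |Dp t r|) := by
    rw [integral_indicator_const _ measurableSet_Icc]
    have hle : ((volume.restrict (Set.Ioi (0:ℝ))) (Set.Icc (r - y) (r + y))).toReal
        ≤ 2 * y := by
      rw [Measure.restrict_apply measurableSet_Icc]
      have h1 : volume (Set.Icc (r - y) (r + y) ∩ Set.Ioi 0) ≤ volume (Set.Icc (r - y) (r + y)) :=
        measure_mono Set.inter_subset_left
      have h2 : volume (Set.Icc (r - y) (r + y)) = ENNReal.ofReal (2 * y) := by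
        rw [Real.volume_Icc]
        congr 1
        ring
      calc (volume (Set.Icc (r - y) (r + y) ∩ Set.Ioi 0)).toReal
          ≤ (volume (Set.Icc (r - y) (r + y))).toReal := by
            apply ENNReal.toReal_mono _ h1
            rw [h2]; exact ENNReal.ofReal_ne_top
        _ = 2 * y := by rw [h2, ENNReal.toReal_ofReal (by linarith)]
    rw [smul_eq_mul]
    exact mul_le_mul_of_nonneg_right hle
      (mul_nonneg (by positivity) (abs_nonneg _))
  exact hmono.trans hval

lemma Q_norm_marginal_int (ht : 0 < t) {y : ℝ} (hy : 0 < y) :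
    Integrable (fun r => ∫ x, ‖Function.uncurry (Q t y) (r, x)‖
      ∂(volume.restrict (Set.Ioi (0:ℝ)))) volume := by
  have hmeas := (Q_uncurry_aesm t y).norm.integral_prod_right'
  apply Integrable.mono' (g := fun r => 2 * y * (|Dp t r| * (|r| + y)))
    (((Dp_weight_int ht hy.le).const_mul (2 * y))) hmeas
  filter_upwards with r
  have hnn : 0 ≤ ∫ x, ‖Function.uncurry (Q t y) (r, x)‖
      ∂(volume.restrict (Set.Ioi (0:ℝ))) :=
    integral_nonneg fun x => norm_nonneg _
  rw [Real.norm_eq_abs, abs_of_nonneg hnn]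
  have hcongr : ∫ x, ‖Function.uncurry (Q t y) (r, x)‖
      ∂(volume.restrict (Set.Ioi (0:ℝ)))
      = ∫ x in Set.Ioi (0:ℝ), Q t y r x := by
    apply integral_congr_ae
    filter_upwards [ae_restrict_mem measurableSet_Ioi] with x hx
    rw [Real.norm_eq_abs]
    apply abs_of_nonneg
    simp only [Function.uncurry, Q]
    split
    · exact mul_nonneg (le_of_lt hx) (abs_nonneg _)
    · exact le_refl 0
  rw [hcongr]
  calc ∫ x in Set.Ioi (0:ℝ), Q t y r x ≤ 2 * y * ((|r| + y) * |Dp t r|) :=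
        window_bound t hy r
    _ = 2 * y * (|Dp t r| * (|r| + y)) := by ring

lemma Q_prod_int (ht : 0 < t) {y : ℝ} (hy : 0 < y) :
    Integrable (Function.uncurry (Q t y))
      (volume.prod (volume.restrict (Set.Ioi (0:ℝ)))) := by
  rw [integrable_prod_iff (Q_uncurry_aesm t y)]
  constructor
  · filter_upwards with r
    exact Q_slice_int t y r
  · exact Q_norm_marginal_int ht hy

lemma PhiB (ht : 0 < t) (hy : 0 < y) :
    Phi t y ≤ 276 * y ^ 2 / Real.sqrt t + 16 * y ^ 3 / t := by
  have hprod := Q_prod_int ht (y := y) hy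
  have hstep1 : Phi t y ≤ ∫ x in Set.Ioi (0:ℝ), 2 * y * ∫ r, Q t y r x := by
    refine integral_mono_of_nonneg ?_ ((hprod.integral_prod_right).const_mul (2*y)) ?_
    · filter_upwards [ae_restrict_mem measurableSet_Ioi] with x hx
      simpa using mul_nonneg (le_of_lt hx) (abs_nonneg (Ekern t x y))
    · filter_upwards [ae_restrict_mem measurableSet_Ioi] with x hx
      have h1 := Ekern_abs_le ht hy.le x
      have h2 : ∫ r, Q t y r x = x * ∫ r in Set.Icc (x - y) (x + y), |Dp t r| := by
        rw [Q_eq_indicator' t y x, integral_indicator measurableSet_Icc,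
          ← integral_const_mul]
      have h3 := mul_le_mul_of_nonneg_left h1 (le_of_lt hx)
      calc x * |Ekern t x y|
          ≤ x * (2 * y * ∫ r in Set.Icc (x - y) (x + y), |Dp t r|) := h3
        _ = 2 * y * (x * ∫ r in Set.Icc (x - y) (x + y), |Dp t r|) := by ring
        _ = 2 * y * ∫ r, Q t y r x := by rw [h2]
  have hswap : ∫ x in Set.Ioi (0:ℝ), (∫ r, Q t y r x)
      = ∫ r, ∫ x in Set.Ioi (0:ℝ), Q t y r x := by
    exact (integral_integral_swap hprod).symm
  have hstep2 : ∫ r, ∫ x in Set.Ioi (0:ℝ), Q t y r x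
      ≤ ∫ r, 2 * y * (|Dp t r| * (|r| + y)) := by
    refine integral_mono_of_nonneg ?_ ((Dp_weight_int ht hy.le).const_mul (2*y)) ?_
    · filter_upwards with r
      apply integral_nonneg_of_ae
      filter_upwards [ae_restrict_mem measurableSet_Ioi] with x hx
      simp only [Q]
      split
      · exact mul_nonneg (le_of_lt hx) (abs_nonneg _)
      · exact le_refl 0
    · filter_upwards with r
      calc ∫ x in Set.Ioi (0:ℝ), Q t y r x ≤ 2 * y * ((|r| + y) * |Dp t r|) :=
            window_bound t hy r
        _ = 2 * y * (|Dp t r| * (|r| + y)) := by ring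
  have hstep3 : ∫ r, 2 * y * (|Dp t r| * (|r| + y)) ≤ 2 * y * (69 / Real.sqrt t + 4 * y / t) := by
    rw [integral_const_mul]
    exact mul_le_mul_of_nonneg_left (Dp_mom ht hy.le) (by positivity)
  have hconst : ∫ x in Set.Ioi (0:ℝ), 2 * y * ∫ r, Q t y r x
      = 2 * y * ∫ x in Set.Ioi (0:ℝ), (∫ r, Q t y r x) := integral_const_mul _ _
  calc Phi t y ≤ ∫ x in Set.Ioi (0:ℝ), 2 * y * ∫ r, Q t y r x := hstep1
    _ = 2 * y * ∫ x in Set.Ioi (0:ℝ), (∫ r, Q t y r x) := hconst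
    _ = 2 * y * ∫ r, ∫ x in Set.Ioi (0:ℝ), Q t y r x := by rw [hswap]
    _ ≤ 2 * y * (2 * y * (69 / Real.sqrt t + 4 * y / t)) := by
        apply mul_le_mul_of_nonneg_left _ (by positivity)
        exact hstep2.trans hstep3
    _ = 276 * y ^ 2 / Real.sqrt t + 16 * y ^ 3 / t := by ring

/-! ### linearity identity and the main swap bound -/

lemma yu_int (u₀ : ℝ → ℝ) (hu₀ : IntegrableOn u₀ (Set.Ioi (0 : ℝ)))
    (hmom : IntegrableOn (fun y => y * |u₀ y|) (Set.Ioi (0 : ℝ))) :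
    IntegrableOn (fun y => y * u₀ y) (Set.Ioi (0 : ℝ)) := by
  apply hmom.mono'
  · exact (aestronglyMeasurable_id.restrict.mul hu₀.aestronglyMeasurable)
  · filter_upwards [ae_restrict_mem measurableSet_Ioi] with y hy
    rw [Real.norm_eq_abs, abs_mul, abs_of_pos hy]

lemma Ku_int (u₀ : ℝ → ℝ) (hu₀ : IntegrableOn u₀ (Set.Ioi (0 : ℝ))) (ht : 0 < t) (x : ℝ) :
    IntegrableOn (fun y => (heatKernel1 t (x - y) - heatKernel1 t (x + y)) * u₀ y)
      (Set.Ioi (0 : ℝ)) := by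
  apply Integrable.mono' ((hu₀.norm).const_mul (2 * (4 * π * t) ^ (-(1:ℝ)/2)))
  · apply AEStronglyMeasurable.mul _ hu₀.aestronglyMeasurable
    exact ((hk_cont.comp (continuous_const.sub continuous_id)).sub
      (hk_cont.comp (continuous_const.add continuous_id))).aestronglyMeasurable.restrict
  · filter_upwards with y
    rw [Real.norm_eq_abs, abs_mul]
    have h1 : |heatKernel1 t (x - y) - heatKernel1 t (x + y)|
        ≤ 2 * (4 * π * t) ^ (-(1:ℝ)/2) := by
      have l1 := hk_le ht (x - y)
      have l2 := hk_le ht (x + y)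
      have p1 := (hk_pos ht (x - y)).le
      have p2 := (hk_pos ht (x + y)).le
      rw [abs_le]
      constructor <;> linarith
    calc |heatKernel1 t (x - y) - heatKernel1 t (x + y)| * |u₀ y|
        ≤ (2 * (4 * π * t) ^ (-(1:ℝ)/2)) * |u₀ y| :=
          mul_le_mul_of_nonneg_right h1 (abs_nonneg _)
      _ = (2 * (4 * π * t) ^ (-(1:ℝ)/2)) * ‖u₀ y‖ := by rw [Real.norm_eq_abs]

lemma ident (u₀ : ℝ → ℝ) (hu₀ : IntegrableOn u₀ (Set.Ioi (0 : ℝ)))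
    (hmom : IntegrableOn (fun y => y * |u₀ y|) (Set.Ioi (0 : ℝ))) (ht : 0 < t) (x : ℝ) :
    halfLineSol u₀ x t - 2 * (∫ y in Set.Ioi (0 : ℝ), y * u₀ y) * dipole x t
      = ∫ y in Set.Ioi (0 : ℝ), Ekern t x y * u₀ y := by
  have hyu := yu_int u₀ hu₀ hmom
  have hK := Ku_int u₀ hu₀ ht x
  have hD : IntegrableOn (fun y => (2 * dipole x t) * (y * u₀ y)) (Set.Ioi (0 : ℝ)) :=
    hyu.const_mul _
  have h2 : 2 * (∫ y in Set.Ioi (0 : ℝ), y * u₀ y) * dipole x t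
      = ∫ y in Set.Ioi (0 : ℝ), (2 * dipole x t) * (y * u₀ y) := by
    rw [integral_const_mul]
    ring
  unfold halfLineSol
  rw [h2, ← integral_sub hK hD]
  apply setIntegral_congr_fun measurableSet_Ioi
  intro y _
  unfold Ekern
  ring

noncomputable def Pfun (u₀ : ℝ → ℝ) (t : ℝ) : ℝ × ℝ → ℝ :=
  fun p => |u₀ p.1| * (p.2 * |Ekern t p.2 p.1|)

lemma swap_bound (u₀ : ℝ → ℝ) (hu₀ : IntegrableOn u₀ (Set.Ioi (0 : ℝ)))
    (hmom : IntegrableOn (fun y => y * |u₀ y|) (Set.Ioi (0 : ℝ))) (ht : 0 < t) :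
    ∫ x in Set.Ioi (0 : ℝ),
        |halfLineSol u₀ x t - 2 * (∫ y in Set.Ioi (0 : ℝ), y * u₀ y) * dipole x t| * x
      ≤ ∫ y in Set.Ioi (0 : ℝ), |u₀ y| * Phi t y := by
  have habs : AEStronglyMeasurable (fun y => |u₀ y|) (volume.restrict (Set.Ioi (0:ℝ))) := by
    simpa only [Real.norm_eq_abs] using hu₀.aestronglyMeasurable.norm
  have hPaesm : AEStronglyMeasurable (Pfun u₀ t)
      ((volume.restrict (Set.Ioi (0:ℝ))).prod (volume.restrict (Set.Ioi (0:ℝ)))) := by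
    unfold Pfun
    exact (habs.comp_fst).mul ((continuous_snd.mul (Ekern_cont t).abs).aestronglyMeasurable)
  have hnormmarg : Integrable (fun y => ∫ x, ‖Pfun u₀ t (y, x)‖
      ∂(volume.restrict (Set.Ioi (0:ℝ)))) (volume.restrict (Set.Ioi (0:ℝ))) := by
    apply Integrable.mono' (hmom.const_mul 14) (hPaesm.norm.integral_prod_right')
    filter_upwards [ae_restrict_mem measurableSet_Ioi] with y hy
    have hnn : 0 ≤ ∫ x, ‖Pfun u₀ t (y, x)‖ ∂(volume.restrict (Set.Ioi (0:ℝ))) :=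
      integral_nonneg fun x => norm_nonneg _
    rw [Real.norm_eq_abs, abs_of_nonneg hnn]
    have hcongr : ∫ x, ‖Pfun u₀ t (y, x)‖ ∂(volume.restrict (Set.Ioi (0:ℝ)))
        = ∫ x in Set.Ioi (0:ℝ), |u₀ y| * (x * |Ekern t x y|) := by
      apply integral_congr_ae
      filter_upwards [ae_restrict_mem measurableSet_Ioi] with x hx
      simp only [Pfun, Real.norm_eq_abs]
      rw [abs_of_nonneg (mul_nonneg (abs_nonneg _)
        (mul_nonneg (le_of_lt hx) (abs_nonneg _)))]
    rw [hcongr, integral_const_mul]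
    have hPhi : (∫ x in Set.Ioi (0:ℝ), x * |Ekern t x y|) ≤ 14 * y := PhiA ht hy
    calc |u₀ y| * ∫ x in Set.Ioi (0:ℝ), x * |Ekern t x y|
        ≤ |u₀ y| * (14 * y) := mul_le_mul_of_nonneg_left hPhi (abs_nonneg _)
      _ = 14 * (y * |u₀ y|) := by ring
  have hPint : Integrable (Pfun u₀ t)
      ((volume.restrict (Set.Ioi (0:ℝ))).prod (volume.restrict (Set.Ioi (0:ℝ)))) := by
    rw [integrable_prod_iff hPaesm]
    refine ⟨?_, hnormmarg⟩
    filter_upwards with y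
    have := (xE_int ht y).const_mul |u₀ y|
    exact this
  have hmarg_x : Integrable (fun x => ∫ y in Set.Ioi (0:ℝ), Pfun u₀ t (y, x))
      (volume.restrict (Set.Ioi (0:ℝ))) := hPint.integral_prod_right
  have hstep1 : ∫ x in Set.Ioi (0 : ℝ),
      |halfLineSol u₀ x t - 2 * (∫ y in Set.Ioi (0 : ℝ), y * u₀ y) * dipole x t| * x
      ≤ ∫ x in Set.Ioi (0:ℝ), (∫ y in Set.Ioi (0:ℝ), Pfun u₀ t (y, x)) := by
    refine integral_mono_of_nonneg ?_ hmarg_x ?_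
    · filter_upwards [ae_restrict_mem measurableSet_Ioi] with x hx
      simpa using mul_nonneg (abs_nonneg _) (le_of_lt hx)
    · filter_upwards [ae_restrict_mem measurableSet_Ioi] with x hx
      rw [ident u₀ hu₀ hmom ht x]
      have h1 : |∫ y in Set.Ioi (0:ℝ), Ekern t x y * u₀ y|
          ≤ ∫ y in Set.Ioi (0:ℝ), ‖Ekern t x y * u₀ y‖ := by
        simpa [Real.norm_eq_abs] using
          norm_integral_le_integral_norm (f := fun y => Ekern t x y * u₀ y)
            (μ := volume.restrict (Set.Ioi (0:ℝ)))
      have h2 : x * ∫ y in Set.Ioi (0:ℝ), ‖Ekern t x y * u₀ y‖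
          = ∫ y in Set.Ioi (0:ℝ), Pfun u₀ t (y, x) := by
        rw [← integral_const_mul]
        apply setIntegral_congr_fun measurableSet_Ioi
        intro y _
        simp only [Pfun, Real.norm_eq_abs, abs_mul]
        ring
      calc |∫ y in Set.Ioi (0:ℝ), Ekern t x y * u₀ y| * x
          = x * |∫ y in Set.Ioi (0:ℝ), Ekern t x y * u₀ y| := by ring
        _ ≤ x * ∫ y in Set.Ioi (0:ℝ), ‖Ekern t x y * u₀ y‖ :=
            mul_le_mul_of_nonneg_left h1 (le_of_lt hx)
        _ = ∫ y in Set.Ioi (0:ℝ), Pfun u₀ t (y, x) := h2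
  have hswap : ∫ x in Set.Ioi (0:ℝ), (∫ y in Set.Ioi (0:ℝ), Pfun u₀ t (y, x))
      = ∫ y in Set.Ioi (0:ℝ), (∫ x in Set.Ioi (0:ℝ), Pfun u₀ t (y, x)) :=
    (integral_integral_swap (f := fun y x => Pfun u₀ t (y, x)) hPint).symm
  have hinner : ∀ y, (∫ x in Set.Ioi (0:ℝ), Pfun u₀ t (y, x)) = |u₀ y| * Phi t y := by
    intro y
    simp only [Pfun]
    rw [integral_const_mul]
    rfl
  calc ∫ x in Set.Ioi (0 : ℝ),
      |halfLineSol u₀ x t - 2 * (∫ y in Set.Ioi (0 : ℝ), y * u₀ y) * dipole x t| * x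
      ≤ ∫ x in Set.Ioi (0:ℝ), (∫ y in Set.Ioi (0:ℝ), Pfun u₀ t (y, x)) := hstep1
    _ = ∫ y in Set.Ioi (0:ℝ), (∫ x in Set.Ioi (0:ℝ), Pfun u₀ t (y, x)) := hswap
    _ = ∫ y in Set.Ioi (0:ℝ), |u₀ y| * Phi t y := by
        apply setIntegral_congr_fun measurableSet_Ioi
        intro y _
        exact hinner y

lemma sqrt_tendsto_atTop : Tendsto Real.sqrt atTop atTop := by
  apply tendsto_atTop_atTop_of_monotone
  · intro a b hab
    exact Real.sqrt_le_sqrt hab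
  · intro b
    refine ⟨(max b 0) ^ 2, ?_⟩
    rw [Real.sqrt_sq (le_max_right b 0)]
    exact le_max_left b 0

end HLD

/-- Dipole asymptotics in the weighted `L¹(x dx)` norm: for data with finite first
absolute moment, `∫₀^∞ |u(x,t) − 2𝒩₁·D(x,t)|·x dx → 0` as `t → ∞`. -/
theorem halfline_dipole_weighted_convergence (u₀ : ℝ → ℝ)
    (hu₀ : IntegrableOn u₀ (Set.Ioi (0 : ℝ)))
    (hmom : IntegrableOn (fun y => y * |u₀ y|) (Set.Ioi (0 : ℝ))) :
    Tendsto (fun t : ℝ =>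
        ∫ x in Set.Ioi (0 : ℝ),
          |halfLineSol u₀ x t -
            2 * (∫ y in Set.Ioi (0 : ℝ), y * u₀ y) * dipole x t| * x)
      atTop (nhds 0) := by
  have habs : AEStronglyMeasurable (fun y => |u₀ y|) (volume.restrict (Set.Ioi (0:ℝ))) := by
    simpa only [Real.norm_eq_abs] using hu₀.aestronglyMeasurable.norm
  have hB : Tendsto (fun t : ℝ => ∫ y in Set.Ioi (0:ℝ), |u₀ y| * HLD.Phi t y)
      atTop (nhds 0) := by
    have hdc := tendsto_integral_filter_of_dominated_convergence
      (μ := volume.restrict (Set.Ioi (0:ℝ))) (l := (atTop : Filter ℝ))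
      (F := fun t : ℝ => fun y => |u₀ y| * HLD.Phi t y) (f := fun _ => (0:ℝ))
      (bound := fun y => 14 * (y * |u₀ y|)) ?_ ?_ ?_ ?_
    · simpa using hdc
    · -- measurability
      filter_upwards with t
      have hsm := (Continuous.stronglyMeasurable
        (continuous_snd.mul (HLD.Ekern_cont t).abs)).integral_prod_right'
        (ν := volume.restrict (Set.Ioi (0:ℝ)))
      exact habs.mul hsm.aestronglyMeasurable
    · -- bound
      filter_upwards [eventually_gt_atTop (0:ℝ)] with t ht
      filter_upwards [ae_restrict_mem measurableSet_Ioi] with y hy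
      rw [Real.norm_eq_abs, abs_of_nonneg (mul_nonneg (abs_nonneg _) (HLD.Phi_nonneg t y))]
      calc |u₀ y| * HLD.Phi t y ≤ |u₀ y| * (14 * y) :=
            mul_le_mul_of_nonneg_left (HLD.PhiA ht hy) (abs_nonneg _)
        _ = 14 * (y * |u₀ y|) := by ring
    · exact hmom.const_mul 14
    · -- pointwise limit
      filter_upwards [ae_restrict_mem measurableSet_Ioi] with y hy
      apply squeeze_zero'
        (Filter.Eventually.of_forall fun t => mul_nonneg (abs_nonneg _) (HLD.Phi_nonneg t y))
      · filter_upwards [eventually_gt_atTop (0:ℝ)] with t ht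
        exact mul_le_mul_of_nonneg_left (HLD.PhiB ht hy) (abs_nonneg _)
      · have h1 : Tendsto (fun t : ℝ => (Real.sqrt t)⁻¹) atTop (nhds 0) :=
          tendsto_inv_atTop_zero.comp HLD.sqrt_tendsto_atTop
        have h2 : Tendsto (fun t : ℝ => t⁻¹) atTop (nhds 0) := tendsto_inv_atTop_zero
        have h3 := (h1.const_mul (|u₀ y| * (276 * y ^ 2))).add
          (h2.const_mul (|u₀ y| * (16 * y ^ 3)))
        simp only [mul_zero, add_zero] at h3
        apply h3.congr
        intro t
        ring
  apply squeeze_zero' ?_ ?_ hB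
  · filter_upwards with t
    apply setIntegral_nonneg measurableSet_Ioi
    intro x hx
    exact mul_nonneg (abs_nonneg _) (le_of_lt hx)
  · filter_upwards [eventually_gt_atTop (0:ℝ)] with t ht
    exact HLD.swap_bound u₀ hu₀ hmom ht
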